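/- Let b ≥ 2, ℓ ≥ 1, m = b^{ℓ+1}, and S(a) as in the reflection identity. Then Σ over units a mod m of S(a) equals -φ(m)/2; equivalently, the average of S over the units is -1/2. -/

import Mathlib

open Finset

lemma gm_floor_pair (m a k : ℕ) (hm : 2 ≤ m) (hcop : Nat.Coprime a m)
    (ha2 : a < m) (hk1 : 1 ≤ k) (hk2 : k < m) :
    k * a / m + k * (m - a) / m = k - 1 := by
  have hm0 : 0 < m := by omega
  have hndvd : ¬ m ∣ k * a := by
    intro h
    have : m ∣ k := (Nat.coprime_comm.mp hcop).dvd_of_dvd_mul_right h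
    have := Nat.le_of_dvd (by omega) this
    omega
  set q := k * a / m with hq
  set s := k * a % m with hs
  have hdm : m * q + s = k * a := Nat.div_add_mod (k * a) m
  have hs0 : 0 < s := by
    rcases Nat.eq_zero_or_pos s with h | h
    · exact absurd (Nat.dvd_of_mod_eq_zero h) hndvd
    · exact h
  have hsm : s < m := Nat.mod_lt _ hm0
  have hqk : q < k := by
    have h1 : k * a < k * m := Nat.mul_lt_mul_of_le_of_lt (le_refl k) ha2 (by omega)
    have h2 : k * m = m * k := Nat.mul_comm k m
    have h3 : m * q < m * k := by omega
    exact Nat.lt_of_mul_lt_mul_left h3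
  have h2 : k * (m - a) + k * a = k * m := by
    rw [← Nat.mul_add, Nat.sub_add_cancel ha2.le]
  have h3 : m * (k - q - 1) + m * (q + 1) = m * k := by
    rw [← Nat.mul_add]; congr 1; omega
  have h4 : m * (q + 1) = m * q + m := by ring
  have h5 : k * m = m * k := Nat.mul_comm k m
  have hkey : k * (m - a) = m * (k - q - 1) + (m - s) := by omega
  rw [hkey, Nat.mul_add_div hm0, Nat.div_eq_of_lt (by omega)]
  omega

lemma gm_term_pair (m a n : ℕ) (hm : 2 ≤ m) (hcop : Nat.Coprime a m)
    (ha1 : 1 ≤ a) (ha2 : a < m) (hn : n < m) :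
    (((n + 1) * a / m : ℕ) - (n * a / m : ℕ) : ℤ)
      + (((n + 1) * (m - a) / m : ℕ) - (n * (m - a) / m : ℕ) : ℤ)
    = if n = 0 then 0 else if n = m - 1 then 2 else 1 := by
  rcases eq_or_ne n 0 with rfl | hn0
  · rw [if_pos rfl]
    have e1 : (0 + 1) * a = a := by ring
    have e2 : (0 + 1) * (m - a) = m - a := by ring
    have e3 : (0 : ℕ) * a = 0 := by ring
    have e4 : (0 : ℕ) * (m - a) = 0 := by ring
    have d1 : a / m = 0 := Nat.div_eq_of_lt ha2
    have d2 : (m - a) / m = 0 := Nat.div_eq_of_lt (by omega)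
    rw [e1, e2, e3, e4, d1, d2]
    simp
  · rcases eq_or_ne n (m - 1) with hnm | hnm
    · have hsucc : n + 1 = m := by omega
      have hX1 : (n + 1) * a / m = a := by rw [hsucc]; exact Nat.mul_div_cancel_left a (by omega)
      have hX2 : (n + 1) * (m - a) / m = m - a := by
        rw [hsucc]; exact Nat.mul_div_cancel_left _ (by omega)
      have hY : n * a / m + n * (m - a) / m = n - 1 :=
        gm_floor_pair m a n hm hcop ha2 (by omega) hn
      rw [hX1, hX2, if_neg hn0, if_pos hnm]
      omega
    · have hX : (n + 1) * a / m + (n + 1) * (m - a) / m = n := by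
        have := gm_floor_pair m a (n + 1) hm hcop ha2 (by omega) (by omega); omega
      have hY : n * a / m + n * (m - a) / m = n - 1 :=
        gm_floor_pair m a n hm hcop ha2 (by omega) hn
      rw [if_neg hn0, if_neg hnm]
      omega

lemma gm_div_b_pair (b B a : ℕ) (hb : 2 ≤ b) (hB : 1 ≤ B)
    (hnd : ¬ b ∣ a) (ha1 : 1 ≤ a) (ha2 : a < b * B) :
    a / b + (b * B - a) / b = B - 1 := by
  set q := a / b with hq
  set r := a % b with hr
  have hdm : b * q + r = a := Nat.div_add_mod a b
  have hr0 : 0 < r := by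
    rcases Nat.eq_zero_or_pos r with h | h
    · exact absurd (Nat.dvd_of_mod_eq_zero h) hnd
    · exact h
  have hrb : r < b := Nat.mod_lt _ (by omega)
  have hqB : q < B := by
    have : b * q < b * B := by omega
    exact Nat.lt_of_mul_lt_mul_left this
  have h3 : b * (B - q - 1) + b * (q + 1) = b * B := by
    rw [← Nat.mul_add]; congr 1; omega
  have h4 : b * (q + 1) = b * q + b := by ring
  have hkey : b * B - a = b * (B - q - 1) + (b - r) := by omega
  rw [hkey, Nat.mul_add_div (by omega), Nat.div_eq_of_lt (by omega)]
  omega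

lemma gm_card_G (b ℓ : ℕ) (hb : 2 ≤ b) (hℓ : 1 ≤ ℓ) :
    ((Finset.range (b ^ (ℓ + 1))).filter (fun n => n / b ^ ℓ = n % b)).card = b ^ ℓ := by
  have hB : 0 < b ^ ℓ := Nat.pow_pos (by omega)
  have hdvd : b ∣ b ^ ℓ := dvd_pow_self b (by omega)
  have hpow : b ^ (ℓ + 1) = b * b ^ ℓ := by ring
  have key : ((Finset.range (b ^ (ℓ + 1))).filter (fun n => n / b ^ ℓ = n % b)).card
      = (Finset.range (b ^ ℓ)).card := by
    apply Finset.card_nbij' (fun n => n % b ^ ℓ) (fun j => (j % b) * b ^ ℓ + j)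
    · intro n hn
      exact Finset.mem_range.mpr (Nat.mod_lt _ hB)
    · intro j hj
      have hj' : j < b ^ ℓ := Finset.mem_range.mp hj
      simp only [Finset.mem_coe, Finset.mem_filter, Finset.mem_range]
      have hjb : j % b < b := Nat.mod_lt _ (by omega)
      constructor
      · have h1 : (j % b) * b ^ ℓ + j < (j % b) * b ^ ℓ + b ^ ℓ := by omega
        have h2 : (j % b) * b ^ ℓ + b ^ ℓ = (j % b + 1) * b ^ ℓ := by ring
        have h3 : (j % b + 1) * b ^ ℓ ≤ b * b ^ ℓ := Nat.mul_le_mul_right _ (by omega)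
        omega
      · have hdiv : ((j % b) * b ^ ℓ + j) / b ^ ℓ = j % b := by
          rw [Nat.mul_comm (j % b) (b ^ ℓ), Nat.mul_add_div hB, Nat.div_eq_of_lt hj']
          omega
        have hmod : ((j % b) * b ^ ℓ + j) % b = j % b := by
          obtain ⟨c, hc⟩ := hdvd
          rw [hc]
          have e : j % b * (b * c) + j = b * (j % b * c) + j := by ring
          rw [e, Nat.mul_add_mod]
        rw [hdiv, hmod]
    · intro n hn
      simp only [Finset.mem_coe, Finset.mem_filter, Finset.mem_range] at hn
      obtain ⟨hn1, hn2⟩ := hn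
      have hdm : b ^ ℓ * (n / b ^ ℓ) + n % b ^ ℓ = n := Nat.div_add_mod n (b ^ ℓ)
      have hmm : n % b ^ ℓ % b = n % b := by
        conv_rhs => rw [← hdm]
        obtain ⟨c, hc⟩ := hdvd
        rw [hc]
        have e : b * c * (n / (b * c)) + n % (b * c) = b * (c * (n / (b * c))) + n % (b * c) := by
          ring
        rw [e, Nat.mul_add_mod]
      beta_reduce
      rw [hmm, ← hn2]
      have e2 : n / b ^ ℓ * b ^ ℓ = b ^ ℓ * (n / b ^ ℓ) := Nat.mul_comm _ _
      omega
    · intro j hj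
      have hj' : j < b ^ ℓ := Finset.mem_range.mp hj
      beta_reduce
      rw [Nat.mul_comm, Nat.mul_add_mod, Nat.mod_eq_of_lt hj']
  rw [key, Finset.card_range]

theorem grand_mean (b ℓ : ℕ) (hb : 2 ≤ b) (hℓ : 1 ≤ ℓ) :
    ∑ a ∈ (Finset.Icc 1 (b ^ (ℓ + 1) - 1)).filter
        (fun a => Nat.Coprime a (b ^ (ℓ + 1))),
      (-1 - (a / b : ℕ)
        + ∑ n ∈ (Finset.range (b ^ (ℓ + 1))).filter (fun n => n / b ^ ℓ = n % b),
          (((n + 1) * a / b ^ (ℓ + 1) : ℕ) - (n * a / b ^ (ℓ + 1) : ℕ) : ℤ)) =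
    -((Nat.totient (b ^ (ℓ + 1)) : ℤ)) / 2 := by
  set m := b ^ (ℓ + 1) with hmdef
  have hB : 0 < b ^ ℓ := Nat.pow_pos (by omega)
  have hpow : m = b * b ^ ℓ := by rw [hmdef]; ring
  have hm2 : 2 ≤ m := by nlinarith [hB]
  set G := (Finset.range m).filter (fun n => n / b ^ ℓ = n % b) with hGdef
  set U := (Finset.Icc 1 (m - 1)).filter (fun a => Nat.Coprime a m) with hUdef
  set S : ℕ → ℤ := fun a => -1 - (a / b : ℕ)
        + ∑ n ∈ G, (((n + 1) * a / m : ℕ) - (n * a / m : ℕ) : ℤ) with hSdef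
  show ∑ a ∈ U, S a = -((Nat.totient m : ℤ)) / 2
  have hUmem : ∀ a ∈ U, 1 ≤ a ∧ a < m ∧ Nat.Coprime a m := by
    intro a ha
    simp only [hUdef, Finset.mem_filter, Finset.mem_Icc] at ha
    exact ⟨ha.1.1, by omega, ha.2⟩
  have hUrefl : ∀ a ∈ U, m - a ∈ U := by
    intro a ha
    obtain ⟨h1, h2, h3⟩ := hUmem a ha
    simp only [hUdef, Finset.mem_filter, Finset.mem_Icc]
    refine ⟨⟨by omega, by omega⟩, ?_⟩
    exact (Nat.coprime_self_sub_left h2.le).mpr h3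
  have hreflect : ∑ a ∈ U, S a = ∑ a ∈ U, S (m - a) := by
    apply Finset.sum_nbij' (fun a => m - a) (fun a => m - a)
    · exact hUrefl
    · exact hUrefl
    · intro a ha; obtain ⟨h1, h2, _⟩ := hUmem a ha; omega
    · intro a ha; obtain ⟨h1, h2, _⟩ := hUmem a ha; omega
    · intro a ha
      obtain ⟨h1, h2, _⟩ := hUmem a ha
      congr 1
      omega
  have h0G : (0 : ℕ) ∈ G := by
    simp only [hGdef, Finset.mem_filter, Finset.mem_range]
    constructor
    · omega
    · simp
  have hm1G : m - 1 ∈ G := by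
    simp only [hGdef, Finset.mem_filter, Finset.mem_range]
    refine ⟨by omega, ?_⟩
    have hdiv : (m - 1) / b ^ ℓ = b - 1 := by
      have h3 : b ^ ℓ * (b - 1) + b ^ ℓ * 1 = b ^ ℓ * b := by
        rw [← Nat.mul_add]; congr 1; omega
      have h5 : b ^ ℓ * b = b * b ^ ℓ := Nat.mul_comm _ _
      have hkey : m - 1 = b ^ ℓ * (b - 1) + (b ^ ℓ - 1) := by omega
      rw [hkey, Nat.mul_add_div hB, Nat.div_eq_of_lt (by omega)]
      omega
    have hmod : (m - 1) % b = b - 1 := by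
      have h3 : b * (b ^ ℓ - 1) + b * 1 = b * b ^ ℓ := by
        rw [← Nat.mul_add]; congr 1; omega
      have hkey : m - 1 = b * (b ^ ℓ - 1) + (b - 1) := by omega
      rw [hkey, Nat.mul_add_mod, Nat.mod_eq_of_lt (by omega)]
    rw [hdiv, hmod]
  have hpair : ∀ a ∈ U, S a + S (m - a) = -1 := by
    intro a ha
    obtain ⟨h1, h2, h3⟩ := hUmem a ha
    have hbdvd : b ∣ m := ⟨b ^ ℓ, hpow⟩
    have hnd : ¬ b ∣ a := by
      intro hdvd
      have : b ∣ Nat.gcd a m := Nat.dvd_gcd hdvd hbdvd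
      rw [h3] at this
      have := Nat.le_of_dvd one_pos this
      omega
    have h2' : a < b * b ^ ℓ := by rw [← hpow]; exact h2
    have hdivb : a / b + (m - a) / b = b ^ ℓ - 1 := by
      rw [hpow]
      exact gm_div_b_pair b (b ^ ℓ) a hb hB hnd h1 h2'
    have hsumG : ∑ n ∈ G, ((((n + 1) * a / m : ℕ) - (n * a / m : ℕ) : ℤ)
          + (((n + 1) * (m - a) / m : ℕ) - (n * (m - a) / m : ℕ) : ℤ)) = ((b ^ ℓ : ℕ) : ℤ) := by
      have hcongr : ∀ n ∈ G, ((((n + 1) * a / m : ℕ) - (n * a / m : ℕ) : ℤ)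
          + (((n + 1) * (m - a) / m : ℕ) - (n * (m - a) / m : ℕ) : ℤ))
          = (1 : ℤ) + (if n = m - 1 then (1 : ℤ) else 0) - (if n = 0 then (1 : ℤ) else 0) := by
        intro n hn
        have hnm : n < m := by
          simp only [hGdef, Finset.mem_filter, Finset.mem_range] at hn
          exact hn.1
        rw [gm_term_pair m a n hm2 h3 h1 h2 hnm]
        split_ifs <;> omega
      rw [Finset.sum_congr rfl hcongr]
      rw [Finset.sum_sub_distrib, Finset.sum_add_distrib, Finset.sum_const,
        Finset.sum_ite_eq' G (m - 1) (fun _ => (1 : ℤ)),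
        Finset.sum_ite_eq' G 0 (fun _ => (1 : ℤ)), if_pos hm1G, if_pos h0G]
      have hcard : G.card = b ^ ℓ := gm_card_G b ℓ hb hℓ
      rw [hcard]
      simp
    simp only [hSdef]
    rw [show ∀ (x y z w : ℤ), (-1 - x + y) + (-1 - z + w) = (y + w) - (x + z) - 2 from
      by intros; ring]
    rw [← Finset.sum_add_distrib, hsumG]
    have h1B : (1 : ℕ) ≤ b ^ ℓ := hB
    set u := a / b with hu
    set v := (m - a) / b with hv
    omega
  have hdouble : 2 * (∑ a ∈ U, S a) = -(U.card : ℤ) := by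
    have h1 : ∑ a ∈ U, (S a + S (m - a)) = ∑ a ∈ U, (-1 : ℤ) :=
      Finset.sum_congr rfl hpair
    have h2 : ∑ a ∈ U, (S a + S (m - a)) = ∑ a ∈ U, S a + ∑ a ∈ U, S (m - a) :=
      Finset.sum_add_distrib
    rw [← hreflect] at h2
    rw [Finset.sum_const, nsmul_eq_mul] at h1
    linarith [h1, h2]
  have hcardU : U.card = Nat.totient m := by
    rw [Nat.totient_eq_card_coprime]
    congr 1
    ext x
    simp only [hUdef, Finset.mem_filter, Finset.mem_Icc, Finset.mem_range]
    constructor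
    · rintro ⟨⟨hx1, hx2⟩, hx3⟩
      exact ⟨by omega, Nat.coprime_comm.mp hx3⟩
    · rintro ⟨hx1, hx2⟩
      have hx0 : x ≠ 0 := by
        rintro rfl
        have : m = 1 := by simpa [Nat.Coprime] using hx2
        omega
      exact ⟨⟨by omega, by omega⟩, Nat.coprime_comm.mp hx2⟩
  rw [hcardU] at hdouble
  omega
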